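/- Let B ⊂ ℕ be a finite non-empty set of positive integers. Then for any arithmetic function a : ℕ → ℂ with |a| ≤ 1, one has limsup_{N→∞} | 𝔼_{n∈[N]} a(n) − 𝔼^{log}_{m∈B} 𝔼_{n∈[N/m]} a(mn) | ≤ ( 𝔼^{log}_{m∈B} 𝔼^{log}_{n∈B} Φ(m,n) )^{1/2}, where Φ(m,n) := gcd(m,n) − 1. -/

import Mathlib

open Filter

/-- Cesàro average of `a` over `[N] = {1, …, N}`. -/
noncomputable def cesaroAvg (N : ℕ) (a : ℕ → ℂ) : ℂ :=
  (N : ℂ)⁻¹ * ∑ n ∈ Finset.Icc 1 N, a n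

/-- Logarithmic average of a complex-valued function over a finite set `B`. -/
noncomputable def logAvgC (B : Finset ℕ) (c : ℕ → ℂ) : ℂ :=
  (∑ m ∈ B, c m / (m : ℂ)) / (∑ m ∈ B, 1 / (m : ℂ))

/-- Logarithmic average of a real-valued function over a finite set `B`. -/
noncomputable def logAvgR (B : Finset ℕ) (c : ℕ → ℝ) : ℝ :=
  (∑ m ∈ B, c m / (m : ℝ)) / (∑ m ∈ B, 1 / (m : ℝ))

open Finset

lemma sum_multiples {M : Type*} [AddCommMonoid M] (m N : ℕ) (hm : 0 < m) (f : ℕ → M) :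
    ∑ n ∈ (Icc 1 N).filter (fun n => m ∣ n), f n = ∑ k ∈ Icc 1 (N / m), f (m * k) := by
  apply Finset.sum_nbij' (fun n => n / m) (fun k => m * k)
  · intro n hn
    simp only [mem_filter, mem_Icc] at hn
    obtain ⟨⟨h1, h2⟩, hd⟩ := hn
    simp only [mem_Icc]
    exact ⟨Nat.one_le_div_iff hm |>.2 (Nat.le_of_dvd h1 hd), Nat.div_le_div_right h2⟩
  · intro k hk
    simp only [mem_Icc] at hk
    simp only [mem_filter, mem_Icc]
    refine ⟨⟨Nat.one_le_iff_ne_zero.2 (Nat.mul_ne_zero hm.ne' (Nat.one_le_iff_ne_zero.1 hk.1)), ?_⟩, dvd_mul_right m k⟩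
    calc m * k ≤ m * (N / m) := Nat.mul_le_mul_left m hk.2
      _ ≤ N := Nat.mul_div_le N m
  · intro n hn
    simp only [mem_filter] at hn
    exact Nat.mul_div_cancel' hn.2
  · intro k hk
    exact Nat.mul_div_cancel_left k hm
  · intro n hn
    simp only [mem_filter] at hn
    rw [Nat.mul_div_cancel' hn.2]

lemma card_multiples' (m N : ℕ) (hm : 0 < m) :
    ((Icc 1 N).filter (fun n => m ∣ n)).card = N / m := by
  rw [Finset.card_eq_sum_ones, sum_multiples m N hm (fun _ => (1 : ℕ)),
    ← Finset.card_eq_sum_ones, Nat.card_Icc, Nat.add_sub_cancel]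

noncomputable def LB (B : Finset ℕ) : ℝ := ∑ m ∈ B, 1 / (m : ℝ)
noncomputable def KB (B : Finset ℕ) : ℝ := (B.card : ℝ) / LB B
noncomputable def QB (B : Finset ℕ) : ℝ := logAvgR B (fun m => logAvgR B (fun n => (Nat.gcd m n : ℝ) - 1))

lemma LB_pos (B : Finset ℕ) (hB : B.Nonempty) (hB_pos : ∀ n ∈ B, 0 < n) : 0 < LB B := by
  apply Finset.sum_pos
  · intro m hm
    have := hB_pos m hm
    positivity
  · exact hB

lemma QB_eq (B : Finset ℕ) :
    QB B = (∑ m ∈ B, ∑ m' ∈ B, ((Nat.gcd m m' : ℝ) - 1) / (m * m')) / (LB B) ^ 2 := by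
  unfold QB logAvgR LB
  rw [sq, ← div_div]
  congr 1
  rw [Finset.sum_div]
  apply Finset.sum_congr rfl
  intro m _
  rw [div_div, mul_comm (∑ m ∈ B, 1/(m:ℝ)) (m:ℝ), ← div_div, Finset.sum_div]
  congr 1
  apply Finset.sum_congr rfl
  intro m' _
  rw [div_div, mul_comm (m':ℝ) (m:ℝ)]

lemma QB_nonneg (B : Finset ℕ) (hB_pos : ∀ n ∈ B, 0 < n) : 0 ≤ QB B := by
  rw [QB_eq]
  apply div_nonneg _ (sq_nonneg _)
  apply Finset.sum_nonneg
  intro m hm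
  apply Finset.sum_nonneg
  intro m' hm'
  apply div_nonneg
  · have h : 0 < Nat.gcd m m' := Nat.gcd_pos_of_pos_left m' (hB_pos m hm)
    have : (1:ℝ) ≤ Nat.gcd m m' := by exact_mod_cast h
    linarith
  · have := hB_pos m hm; have := hB_pos m' hm'; positivity

lemma cast_div_ge (a b : ℕ) (hb : 0 < b) : (a:ℝ)/b - 1 ≤ ((a/b : ℕ):ℝ) := by
  have h : a < b * (a / b + 1) := Nat.lt_mul_div_succ a hb
  have hbr : (0:ℝ) < b := by exact_mod_cast hb
  have h' : (a:ℝ) < b * (((a/b : ℕ):ℝ) + 1) := by exact_mod_cast h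
  rw [sub_le_iff_le_add, div_le_iff₀ hbr]
  nlinarith

lemma main_bound (B : Finset ℕ) (hB : B.Nonempty) (hB_pos : ∀ n ∈ B, 0 < n)
    (a : ℕ → ℂ) (ha : ∀ n, ‖a n‖ ≤ 1) (N : ℕ) (hN : 1 ≤ N) :
    ‖cesaroAvg N a - logAvgC B (fun m => cesaroAvg (N / m) (fun n => a (m * n)))‖ ≤
      KB B / N + Real.sqrt (QB B + 2 * KB B / N) := by
  have hL : 0 < LB B := LB_pos B hB hB_pos
  set L : ℝ := LB B with hLdef
  have hNR : (0:ℝ) < N := by exact_mod_cast hN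
  have hLC : (∑ m ∈ B, 1/(m:ℂ)) = (L:ℂ) := by
    rw [hLdef]; unfold LB; push_cast; rfl
  set T : ℕ → ℂ := fun m => ∑ k ∈ Icc 1 (N / m), a (m * k) with hT
  -- per-m comparison of Cesàro average along multiples with weighted sum
  have key1 : ∀ m ∈ B, ‖cesaroAvg (N/m) (fun n => a (m*n)) / (m:ℂ) - T m / (N:ℂ)‖ ≤ 1 / (N:ℝ) := by
    intro m hm
    have hm1 : 0 < m := hB_pos m hm
    set q := N / m with hq
    rcases Nat.eq_zero_or_pos q with h0 | hq1
    · have hT0 : T m = 0 := by rw [hT]; simp [← hq, h0]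
      have hc0 : cesaroAvg q (fun n => a (m*n)) = 0 := by simp [cesaroAvg, h0]
      rw [hc0, hT0]
      simp
    · have hqm : (q:ℝ) * m ≤ N := by
        have : m * q ≤ N := by rw [hq]; exact Nat.mul_div_le N m
        have := (Nat.cast_le (α := ℝ)).2 this
        push_cast at this; linarith
      have hqR : (0:ℝ) < q := by exact_mod_cast hq1
      have hmR : (0:ℝ) < m := by exact_mod_cast hm1
      have hce : cesaroAvg q (fun n => a (m*n)) = (q:ℂ)⁻¹ * T m := rfl
      have hdiff : cesaroAvg q (fun n => a (m*n)) / (m:ℂ) - T m / (N:ℂ)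
          = ((((q:ℝ) * m)⁻¹ - ((N:ℝ))⁻¹ : ℝ) : ℂ) * T m := by
        rw [hce]; push_cast; field_simp
      rw [hdiff, norm_mul, Complex.norm_real]
      have hTm : ‖T m‖ ≤ (q:ℝ) := by
        calc ‖T m‖ ≤ ∑ k ∈ Icc 1 q, ‖a (m*k)‖ := norm_sum_le _ _
          _ ≤ ∑ k ∈ Icc 1 q, 1 := Finset.sum_le_sum (fun k _ => ha _)
          _ = (q:ℝ) := by rw [Finset.sum_const, Nat.card_Icc, Nat.add_sub_cancel]; simp
      have hcoef : ‖((q:ℝ) * m)⁻¹ - ((N:ℝ))⁻¹‖ ≤ 1 / ((q:ℝ) * N) := by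
        have hqm0 : ((q:ℝ) * m) ≠ 0 := by positivity
        rw [inv_sub_inv hqm0 hNR.ne', Real.norm_eq_abs]
        have hmod : (N:ℝ) - q * m ≤ m := by
          have h2 : N < m * (q + 1) := by rw [hq]; exact Nat.lt_mul_div_succ N hm1
          have := (Nat.cast_lt (α := ℝ)).2 h2
          push_cast at this; nlinarith
        have hnum : |(N:ℝ) - q * m| ≤ m := by
          rw [abs_le]; constructor
          · nlinarith
          · exact hmod
        calc |((N:ℝ) - q*m) / (q*m*N)| = |(N:ℝ) - q*m| / (q*m*N) := by
              rw [abs_div, abs_of_pos (by positivity : (0:ℝ) < q*m*N)]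
          _ ≤ (m:ℝ) / (q*m*N) := by
              apply div_le_div_of_nonneg_right hnum (by positivity) |>.trans_eq rfl
          _ = 1 / ((q:ℝ)*N) := by field_simp
      calc ‖((q:ℝ) * m)⁻¹ - ((N:ℝ))⁻¹‖ * ‖T m‖ ≤ (1/((q:ℝ)*N)) * q := by
            apply mul_le_mul hcoef hTm (norm_nonneg _) (by positivity)
        _ = 1 / N := by field_simp
  set H : ℂ := (∑ m ∈ B, T m / (N:ℂ)) / (L:ℂ) with hH
  have hLne : (L:ℂ) ≠ 0 := by
    simpa using Complex.ofReal_ne_zero.2 hL.ne'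
  have hNne : (N:ℂ) ≠ 0 := by
    exact_mod_cast (Nat.cast_ne_zero (R := ℂ)).2 (by omega)
  have stepA : ‖logAvgC B (fun m => cesaroAvg (N / m) (fun n => a (m * n))) - H‖
      ≤ (B.card : ℝ)/(L*N) := by
    have hGH : logAvgC B (fun m => cesaroAvg (N / m) (fun n => a (m * n))) - H
        = (∑ m ∈ B, (cesaroAvg (N/m) (fun n => a (m*n)) / (m:ℂ) - T m / (N:ℂ))) / (L:ℂ) := by
      unfold logAvgC
      rw [hLC, hH, Finset.sum_sub_distrib, sub_div]
    rw [hGH, norm_div, Complex.norm_real, Real.norm_of_nonneg hL.le]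
    have hnum : ‖∑ m ∈ B, (cesaroAvg (N/m) (fun n => a (m*n)) / (m:ℂ) - T m / (N:ℂ))‖
        ≤ (B.card : ℝ) * (1/N) := by
      calc ‖∑ m ∈ B, (cesaroAvg (N/m) (fun n => a (m*n)) / (m:ℂ) - T m / (N:ℂ))‖
          ≤ ∑ m ∈ B, ‖cesaroAvg (N/m) (fun n => a (m*n)) / (m:ℂ) - T m / (N:ℂ)‖ :=
            norm_sum_le _ _
        _ ≤ ∑ m ∈ B, 1/(N:ℝ) := Finset.sum_le_sum key1
        _ = (B.card : ℝ) * (1/N) := by rw [Finset.sum_const, nsmul_eq_mul]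
    calc ‖∑ m ∈ B, (cesaroAvg (N/m) (fun n => a (m*n)) / (m:ℂ) - T m / (N:ℂ))‖ / L
        ≤ ((B.card : ℝ) * (1/N)) / L := by gcongr
      _ = (B.card : ℝ)/(L*N) := by rw [mul_one_div, div_div, mul_comm (N:ℝ) L]
  set D : ℕ → ℝ := fun n => ∑ m ∈ B, if m ∣ n then (1:ℝ) else 0 with hD
  have hTsum : ∑ m ∈ B, T m = ∑ n ∈ Icc 1 N, ((D n : ℝ):ℂ) * a n := by
    have h1 : ∀ m ∈ B, T m = ∑ n ∈ (Icc 1 N).filter (fun n => m ∣ n), a n := by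
      intro m hm; rw [hT]; exact (sum_multiples m N (hB_pos m hm) a).symm
    calc ∑ m ∈ B, T m = ∑ m ∈ B, ∑ n ∈ Icc 1 N, if m ∣ n then a n else 0 := by
          refine Finset.sum_congr rfl fun m hm => ?_
          rw [h1 m hm, Finset.sum_filter]
      _ = ∑ n ∈ Icc 1 N, ∑ m ∈ B, if m ∣ n then a n else 0 := Finset.sum_comm
      _ = ∑ n ∈ Icc 1 N, ((D n : ℝ):ℂ) * a n := by
          refine Finset.sum_congr rfl fun n _ => ?_
          rw [hD]; push_cast; rw [Finset.sum_mul]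
          refine Finset.sum_congr rfl fun m _ => ?_
          split_ifs <;> simp
  have stepD : cesaroAvg N a - H = (N:ℂ)⁻¹ * ∑ n ∈ Icc 1 N, (1 - ((D n : ℝ):ℂ)/(L:ℂ)) * a n := by
    unfold cesaroAvg
    rw [hH, ← Finset.sum_div, hTsum]
    have expand : ∑ n ∈ Icc 1 N, (1 - ((D n:ℝ):ℂ)/(L:ℂ)) * a n
        = ∑ n ∈ Icc 1 N, a n - (∑ n ∈ Icc 1 N, ((D n:ℝ):ℂ) * a n)/(L:ℂ) := by
      simp_rw [sub_mul, one_mul, div_mul_eq_mul_div]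
      rw [Finset.sum_sub_distrib, Finset.sum_div]
    rw [expand, mul_sub]
    field_simp
  have stepE : ‖cesaroAvg N a - H‖ ≤ (N:ℝ)⁻¹ * ∑ n ∈ Icc 1 N, |1 - D n / L| := by
    rw [stepD, norm_mul, norm_inv, Complex.norm_natCast]
    apply mul_le_mul_of_nonneg_left _ (by positivity)
    calc ‖∑ n ∈ Icc 1 N, (1 - ((D n:ℝ):ℂ)/(L:ℂ)) * a n‖
        ≤ ∑ n ∈ Icc 1 N, ‖(1 - ((D n:ℝ):ℂ)/(L:ℂ)) * a n‖ := norm_sum_le _ _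
      _ ≤ ∑ n ∈ Icc 1 N, |1 - D n / L| := by
          refine Finset.sum_le_sum fun n _ => ?_
          rw [norm_mul]
          have hcast : (1 - ((D n:ℝ):ℂ)/(L:ℂ)) = (((1 - D n/L : ℝ)):ℂ) := by push_cast; ring
          rw [hcast, Complex.norm_real, Real.norm_eq_abs]
          calc |1 - D n/L| * ‖a n‖ ≤ |1 - D n/L| * 1 :=
                mul_le_mul_of_nonneg_left (ha n) (abs_nonneg _)
            _ = |1 - D n/L| := mul_one _
  have hD1 : ∑ n ∈ Icc 1 N, D n = ∑ m ∈ B, ((N/m : ℕ):ℝ) := by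
    rw [hD, Finset.sum_comm]
    refine Finset.sum_congr rfl fun m hm => ?_
    rw [Finset.sum_boole, card_multiples' m N (hB_pos m hm)]
  have hD2 : ∑ n ∈ Icc 1 N, (D n)^2 = ∑ m ∈ B, ∑ m' ∈ B, ((N / Nat.lcm m m' : ℕ):ℝ) := by
    have hsq : ∀ n, (D n)^2 = ∑ m ∈ B, ∑ m' ∈ B, if Nat.lcm m m' ∣ n then (1:ℝ) else 0 := by
      intro n
      rw [hD]
      simp only
      rw [sq, Finset.sum_mul_sum]
      refine Finset.sum_congr rfl fun m _ => ?_
      refine Finset.sum_congr rfl fun m' _ => ?_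
      by_cases h1 : m ∣ n <;> by_cases h2 : m' ∣ n <;>
        simp [h1, h2, Nat.lcm_dvd_iff]
    simp_rw [hsq]
    rw [Finset.sum_comm]
    refine Finset.sum_congr rfl fun m hm => ?_
    rw [Finset.sum_comm]
    refine Finset.sum_congr rfl fun m' hm' => ?_
    rw [Finset.sum_boole, card_multiples' _ N (Nat.lcm_pos (hB_pos m hm) (hB_pos m' hm'))]
  have expand2 : ∑ n ∈ Icc 1 N, (1 - D n / L)^2
      = (N:ℝ) - (2/L) * ∑ n ∈ Icc 1 N, D n + (1/L^2) * ∑ n ∈ Icc 1 N, (D n)^2 := by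
    have hpt : ∀ n, (1 - D n/L)^2 = 1 - (2/L) * D n + (1/L^2) * (D n)^2 := by
      intro n; field_simp; ring
    rw [Finset.sum_congr rfl (fun n _ => hpt n), Finset.sum_add_distrib, Finset.sum_sub_distrib,
      Finset.sum_const, ← Finset.mul_sum, ← Finset.mul_sum, Nat.card_Icc, Nat.add_sub_cancel,
      nsmul_eq_mul, mul_one]
  have bnd1 : (N:ℝ) * L - B.card ≤ ∑ m ∈ B, ((N/m : ℕ):ℝ) := by
    have hterm : ∀ m ∈ B, (N:ℝ)/m - 1 ≤ ((N/m:ℕ):ℝ) := fun m hm => cast_div_ge N m (hB_pos m hm)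
    calc (N:ℝ)*L - B.card = ∑ m ∈ B, ((N:ℝ)/m - 1) := by
          rw [Finset.sum_sub_distrib, Finset.sum_const, nsmul_eq_mul, mul_one, hLdef]
          unfold LB
          rw [Finset.mul_sum]
          congr 1
          refine Finset.sum_congr rfl fun m _ => ?_
          rw [mul_one_div]
      _ ≤ _ := Finset.sum_le_sum hterm
  have hsum1 : ∑ m ∈ B, ∑ m' ∈ B, (1:ℝ)/(m*m') = L^2 := by
    rw [sq, hLdef]
    unfold LB
    rw [Finset.sum_mul_sum]
    refine Finset.sum_congr rfl fun m _ => ?_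
    refine Finset.sum_congr rfl fun m' _ => ?_
    rw [div_mul_div_comm, one_mul]
  have hsumQ : ∑ m ∈ B, ∑ m' ∈ B, ((Nat.gcd m m' : ℝ) - 1) / (m * m') = QB B * L^2 := by
    rw [QB_eq, hLdef]
    field_simp
    exact (mul_div_cancel_right₀ _ (LB_pos B hB hB_pos).ne').symm
  have bnd2 : ∑ m ∈ B, ∑ m' ∈ B, ((N / Nat.lcm m m' : ℕ):ℝ)
      ≤ (N:ℝ) * (QB B * L^2 + L^2) := by
    have hstep : ∀ m ∈ B, ∀ m' ∈ B, ((N / Nat.lcm m m' : ℕ):ℝ)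
        ≤ (N:ℝ) * ((Nat.gcd m m' : ℝ) / (m * m')) := by
      intro m hm m' hm'
      have hmp := hB_pos m hm
      have hm'p := hB_pos m' hm'
      have hl : 0 < Nat.lcm m m' := Nat.lcm_pos hmp hm'p
      calc ((N / Nat.lcm m m' : ℕ):ℝ) ≤ (N:ℝ) / (Nat.lcm m m' : ℝ) := Nat.cast_div_le
        _ = (N:ℝ) * ((Nat.gcd m m' : ℝ) / (m * m')) := by
            have hml : (Nat.gcd m m' : ℝ) * (Nat.lcm m m' : ℝ) = (m:ℝ) * m' := by
              exact_mod_cast Nat.gcd_mul_lcm m m'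
            have hg : (0:ℝ) < Nat.gcd m m' := by
              exact_mod_cast Nat.gcd_pos_of_pos_left m' hmp
            have hlr : (0:ℝ) < Nat.lcm m m' := by exact_mod_cast hl
            have hmr : (0:ℝ) < m := by exact_mod_cast hmp
            have hm'r : (0:ℝ) < m' := by exact_mod_cast hm'p
            field_simp
            linear_combination (-1:ℝ) * hml
    calc ∑ m ∈ B, ∑ m' ∈ B, ((N / Nat.lcm m m' : ℕ):ℝ)
        ≤ ∑ m ∈ B, ∑ m' ∈ B, (N:ℝ) * ((Nat.gcd m m' : ℝ) / (m * m')) :=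
          Finset.sum_le_sum fun m hm => Finset.sum_le_sum (hstep m hm)
      _ = (N:ℝ) * ∑ m ∈ B, ∑ m' ∈ B, (Nat.gcd m m' : ℝ) / (m * m') := by
          rw [Finset.mul_sum]
          refine Finset.sum_congr rfl fun m _ => ?_
          rw [Finset.mul_sum]
      _ = (N:ℝ) * (QB B * L^2 + L^2) := by
          congr 1
          rw [← hsumQ, ← hsum1, ← Finset.sum_add_distrib]
          refine Finset.sum_congr rfl fun m _ => ?_
          rw [← Finset.sum_add_distrib]
          refine Finset.sum_congr rfl fun m' _ => ?_
          rw [← add_div, sub_add_cancel]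
  have stepG : ∑ n ∈ Icc 1 N, (1 - D n / L)^2 ≤ (N:ℝ) * QB B + 2 * B.card / L := by
    rw [expand2, hD1, hD2]
    have h1 : (2/L) * ((N:ℝ)*L - B.card) ≤ (2/L) * ∑ m ∈ B, ((N/m : ℕ):ℝ) :=
      mul_le_mul_of_nonneg_left bnd1 (by positivity)
    have h2 : (1/L^2) * (∑ m ∈ B, ∑ m' ∈ B, ((N / Nat.lcm m m' : ℕ):ℝ))
        ≤ (1/L^2) * ((N:ℝ) * (QB B * L^2 + L^2)) :=
      mul_le_mul_of_nonneg_left bnd2 (by positivity)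
    have hfin : (N:ℝ) - (2/L) * ((N:ℝ)*L - B.card) + (1/L^2) * ((N:ℝ) * (QB B * L^2 + L^2))
        = (N:ℝ) * QB B + 2 * B.card / L := by
      field_simp
      ring
    linarith
  have hKN : KB B / N = (B.card:ℝ)/(L*N) := by
    unfold KB
    rw [← hLdef, div_div]
  have hK0 : 0 ≤ KB B := by
    unfold KB
    rw [← hLdef]
    positivity
  have hEH : ‖cesaroAvg N a - H‖ ≤ Real.sqrt (QB B + 2 * KB B / N) := by
    refine stepE.trans ?_
    have hnn : 0 ≤ (N:ℝ)⁻¹ * ∑ n ∈ Icc 1 N, |1 - D n / L| := by positivity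
    have hy : 0 ≤ QB B + 2 * KB B / N := by
      have := QB_nonneg B hB_pos
      positivity
    rw [Real.le_sqrt hnn hy]
    have cs : (∑ n ∈ Icc 1 N, |1 - D n/L|)^2 ≤ (N:ℝ) * ∑ n ∈ Icc 1 N, (1 - D n/L)^2 := by
      have h := sum_mul_sq_le_sq_mul_sq (Icc 1 N) (fun _ => (1:ℝ)) (fun n => |1 - D n/L|)
      simp only [one_mul, one_pow] at h
      rw [Finset.sum_const, Nat.card_Icc, Nat.add_sub_cancel, nsmul_eq_mul, mul_one] at h
      simpa [sq_abs] using h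
    calc ((N:ℝ)⁻¹ * ∑ n ∈ Icc 1 N, |1 - D n / L|)^2
        = ((N:ℝ)⁻¹)^2 * (∑ n ∈ Icc 1 N, |1 - D n / L|)^2 := mul_pow _ _ _
      _ ≤ ((N:ℝ)⁻¹)^2 * ((N:ℝ) * ∑ n ∈ Icc 1 N, (1 - D n/L)^2) :=
          mul_le_mul_of_nonneg_left cs (by positivity)
      _ ≤ ((N:ℝ)⁻¹)^2 * ((N:ℝ) * ((N:ℝ) * QB B + 2 * B.card / L)) := by
          apply mul_le_mul_of_nonneg_left _ (by positivity)
          exact mul_le_mul_of_nonneg_left stepG (by positivity)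
      _ = QB B + 2 * KB B / N := by
          unfold KB
          rw [← hLdef]
          have hLne' : L ≠ 0 := hL.ne'
          have hNne' : (N:ℝ) ≠ 0 := hNR.ne'
          field_simp
  have hsplit : cesaroAvg N a - logAvgC B (fun m => cesaroAvg (N / m) (fun n => a (m * n)))
      = (cesaroAvg N a - H) - (logAvgC B (fun m => cesaroAvg (N / m) (fun n => a (m * n))) - H) := by
    ring
  rw [hsplit]
  calc ‖(cesaroAvg N a - H) - (logAvgC B (fun m => cesaroAvg (N / m) (fun n => a (m * n))) - H)‖
      ≤ ‖cesaroAvg N a - H‖ + ‖logAvgC B (fun m => cesaroAvg (N / m) (fun n => a (m * n))) - H‖ :=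
        norm_sub_le _ _
    _ ≤ KB B / N + Real.sqrt (QB B + 2 * KB B / N) := by
        rw [hKN]
        linarith [hEH, stepA]

theorem stmt_12 (B : Finset ℕ) (hB : B.Nonempty) (hB_pos : ∀ n ∈ B, 0 < n)
    (a : ℕ → ℂ) (ha : ∀ n, ‖a n‖ ≤ 1) :
    Filter.limsup (fun N : ℕ =>
        ‖cesaroAvg N a - logAvgC B (fun m => cesaroAvg (N / m) (fun n => a (m * n)))‖)
      atTop ≤
    Real.sqrt (logAvgR B (fun m => logAvgR B (fun n => (Nat.gcd m n : ℝ) - 1))) := by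
  have hQ : Real.sqrt (logAvgR B (fun m => logAvgR B (fun n => (Nat.gcd m n : ℝ) - 1)))
      = Real.sqrt (QB B) := rfl
  rw [hQ]
  set u := fun N : ℕ =>
      ‖cesaroAvg N a - logAvgC B (fun m => cesaroAvg (N / m) (fun n => a (m * n)))‖ with hu
  set v := fun N : ℕ => KB B / N + Real.sqrt (QB B + 2 * KB B / N) with hv
  have hlim : Tendsto v atTop (nhds (Real.sqrt (QB B))) := by
    have h1 : Tendsto (fun N : ℕ => KB B / N) atTop (nhds 0) :=
      tendsto_const_div_atTop_nhds_zero_nat _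
    have h2 : Tendsto (fun N : ℕ => 2 * KB B / N) atTop (nhds 0) := by
      simpa [mul_div_assoc] using h1.const_mul 2
    have h3 : Tendsto (fun N : ℕ => QB B + 2 * KB B / N) atTop (nhds (QB B)) := by
      simpa using (tendsto_const_nhds.add h2)
    have h4 : Tendsto (fun N : ℕ => Real.sqrt (QB B + 2 * KB B / N)) atTop
        (nhds (Real.sqrt (QB B))) := (Real.continuous_sqrt.continuousAt).tendsto.comp h3
    simpa using h1.add h4
  have hle : u ≤ᶠ[atTop] v := by
    filter_upwards [eventually_ge_atTop 1] with N hN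
    exact main_bound B hB hB_pos a ha N hN
  calc limsup u atTop ≤ limsup v atTop := by
        refine limsup_le_limsup hle ?_ ?_
        · exact IsBoundedUnder.isCoboundedUnder_le (isBoundedUnder_of ⟨0, fun N => norm_nonneg _⟩)
        · exact hlim.isBoundedUnder_le
    _ = Real.sqrt (QB B) := hlim.limsup_eq
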